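/- Let A ∈ ℂ^{m×n}, let p ∈ ℝ^m be a probability distribution with p(k) ≥ ‖A(k,·)‖²/(φ‖A‖_F²) for all k, and let S ∈ ℝ^{r×m} have r i.i.d. rows, each equal to e_k/√(r·p(k)) with probability p(k). Then ‖SA‖_F² ≤ φ‖A‖_F² holds surely, and moreover for every δ ∈ (0,1], with probability at least 1−δ one has |‖SA‖_F² − ‖A‖_F²| ≤ √(φ² ln(2/δ)/(2r)) · ‖A‖_F². -/

import Mathlib

open Matrix BigOperators
open scoped Classical

/-- Squared Frobenius norm of a matrix. -/
noncomputable def frobSq {m n α : Type*} [Fintype m] [Fintype n] [Norm α]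
    (A : Matrix m n α) : ℝ :=
  ∑ i, ∑ j, ‖A i j‖ ^ 2

/-- Frobenius norm bounds for importance sampling sketches: if `S ks` has `r` rows, row `i`
being `e_{ks i}/√(r p (ks i))` with the indices `ks i` drawn i.i.d. from a `φ`-oversampled
importance sampling distribution `p` for the rows of `A`, then surely
`‖SA‖_F² ≤ φ‖A‖_F²`, and for every `δ ∈ (0,1]`, with probability at least `1−δ`,
`|‖SA‖_F² − ‖A‖_F²| ≤ √(φ² ln(2/δ)/(2r)) ‖A‖_F²`. -/

lemma log_core (q : ℝ) (hq0 : 0 ≤ q) (hq1 : q ≤ 1) (x : ℝ) :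
    Real.log (1 - q + q * Real.exp x) ≤ q * x + x ^ 2 / 8 := by
  set D : ℝ → ℝ := fun y => 1 - q + q * Real.exp y with hD
  have hDpos : ∀ y, 0 < D y := by
    intro y
    rcases eq_or_lt_of_le hq0 with h | h
    · simp [hD, ← h]
    · have := Real.exp_pos y
      have : 0 < q * Real.exp y := mul_pos h this
      show (0:ℝ) < 1 - q + q * Real.exp y
      linarith
  have hDd : ∀ y, HasDerivAt D (q * Real.exp y) y := fun y => by
    exact ((Real.hasDerivAt_exp y).const_mul q).const_add (1 - q)
  set G : ℝ → ℝ := fun y => q + y / 4 - q * Real.exp y / D y with hG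
  have hGd : ∀ y, HasDerivAt G
      (1 / 4 - (q * Real.exp y * D y - q * Real.exp y * (q * Real.exp y)) / D y ^ 2) y := by
    intro y
    have h1 : HasDerivAt (fun y => q * Real.exp y) (q * Real.exp y) y :=
      (Real.hasDerivAt_exp y).const_mul q
    have h2 := h1.div (hDd y) (hDpos y).ne'
    have h3 : HasDerivAt (fun y : ℝ => q + y / 4) (1 / 4) y := by
      simpa using ((hasDerivAt_id y).div_const 4).const_add q
    exact h3.sub h2
  have hGderiv_nonneg : ∀ y, 0 ≤ 1 / 4 - (q * Real.exp y * D y - q * Real.exp y * (q * Real.exp y)) / D y ^ 2 := by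
    intro y
    rw [sub_nonneg, div_le_iff₀ (pow_pos (hDpos y) 2)]
    have h := (Real.exp_pos y).le
    show q * Real.exp y * (1 - q + q * Real.exp y) - _ ≤ 1 / 4 * (1 - q + q * Real.exp y) ^ 2
    nlinarith [sq_nonneg (1 - q - q * Real.exp y), mul_nonneg hq0 h]
  have hGmono : Monotone G := by
    apply monotone_of_deriv_nonneg (fun y => (hGd y).differentiableAt)
    intro y
    rw [(hGd y).deriv]
    exact hGderiv_nonneg y
  have hG0 : G 0 = 0 := by
    simp [hG, hD, Real.exp_zero]
  set f : ℝ → ℝ := fun y => q * y + y ^ 2 / 8 - Real.log (D y) with hf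
  have hfd : ∀ y, HasDerivAt f (G y) y := by
    intro y
    have hlog : HasDerivAt (fun y => Real.log (D y)) (q * Real.exp y / D y) y :=
      (hDd y).log (hDpos y).ne'
    have hpoly : HasDerivAt (fun y : ℝ => q * y + y ^ 2 / 8) (q + y / 4) y := by
      have h1 : HasDerivAt (fun y : ℝ => q * y) q y := by
        simpa using (hasDerivAt_id y).const_mul q
      have h2 : HasDerivAt (fun y : ℝ => y ^ 2 / 8) (y / 4) y := by
        have := (hasDerivAt_pow 2 y).div_const 8
        exact this.congr_deriv (by push_cast; ring)
      exact h1.add h2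
    exact hpoly.sub hlog
  have hfdiff : Differentiable ℝ f := fun y => (hfd y).differentiableAt
  have hf0 : f 0 = 0 := by simp [hf, hD]
  have hfnonneg : 0 ≤ f x := by
    rcases le_total 0 x with hx | hx
    · have hm : MonotoneOn f (Set.Ici 0) := by
        apply monotoneOn_of_deriv_nonneg (convex_Ici 0) hfdiff.continuous.continuousOn
          hfdiff.differentiableOn
        intro y hy
        rw [(hfd y).deriv]
        rw [interior_Ici] at hy
        have := hGmono (le_of_lt hy)
        rw [hG0] at this
        exact this
      have := hm (Set.self_mem_Ici) (Set.mem_Ici.2 hx) hx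
      rw [hf0] at this
      exact this
    · have hm : AntitoneOn f (Set.Iic 0) := by
        apply antitoneOn_of_deriv_nonpos (convex_Iic 0) hfdiff.continuous.continuousOn
          hfdiff.differentiableOn
        intro y hy
        rw [(hfd y).deriv]
        rw [interior_Iic] at hy
        have := hGmono (le_of_lt hy)
        rw [hG0] at this
        exact this
      have := hm (Set.mem_Iic.2 hx) (Set.self_mem_Iic) hx
      rw [hf0] at this
      exact this
  have : Real.log (D x) ≤ q * x + x ^ 2 / 8 := by
    have : f x = q * x + x ^ 2 / 8 - Real.log (D x) := rfl
    linarith [hfnonneg, this.symm ▸ hfnonneg]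
  simpa [hD] using this

lemma mgf_bound {ι : Type*} [Fintype ι] (w f : ι → ℝ) (hw0 : ∀ k, 0 ≤ w k)
    (hw1 : ∑ k, w k = 1) (c : ℝ) (hc : 0 < c) (hf0 : ∀ k, 0 ≤ f k) (hfc : ∀ k, f k ≤ c)
    (l : ℝ) :
    ∑ k, w k * Real.exp (l * (f k - ∑ j, w j * f j)) ≤ Real.exp (l ^ 2 * c ^ 2 / 8) := by
  set μ : ℝ := ∑ j, w j * f j with hμ
  have hμ0 : 0 ≤ μ := Finset.sum_nonneg fun k _ => mul_nonneg (hw0 k) (hf0 k)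
  have hμc : μ ≤ c := by
    calc μ ≤ ∑ k, w k * c := Finset.sum_le_sum fun k _ => mul_le_mul_of_nonneg_left (hfc k) (hw0 k)
    _ = c := by rw [← Finset.sum_mul, hw1, one_mul]
  set q : ℝ := μ / c with hq
  have hq0 : 0 ≤ q := div_nonneg hμ0 hc.le
  have hq1 : q ≤ 1 := by rw [hq, div_le_one hc]; exact hμc
  -- pointwise convexity bound
  have hconv : ∀ k, Real.exp (l * f k) ≤ (1 - f k / c) + (f k / c) * Real.exp (l * c) := by
    intro k
    have ht0 : 0 ≤ f k / c := div_nonneg (hf0 k) hc.le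
    have ht1 : f k / c ≤ 1 := by rw [div_le_one hc]; exact hfc k
    have h := convexOn_exp.2 (Set.mem_univ (0 : ℝ)) (Set.mem_univ (l * c))
      (by linarith : (0:ℝ) ≤ 1 - f k / c) ht0 (by ring)
    simp only [smul_eq_mul, mul_zero, zero_add, Real.exp_zero, mul_one] at h
    have harg : f k / c * (l * c) = l * f k := by field_simp
    rw [harg] at h
    linarith [h]
  have hsum : ∑ k, w k * Real.exp (l * f k) ≤ 1 - q + q * Real.exp (l * c) := by
    calc ∑ k, w k * Real.exp (l * f k)
        ≤ ∑ k, w k * ((1 - f k / c) + (f k / c) * Real.exp (l * c)) :=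
          Finset.sum_le_sum fun k _ => mul_le_mul_of_nonneg_left (hconv k) (hw0 k)
      _ = (∑ k, w k) - (∑ k, w k * f k) / c + ((∑ k, w k * f k) / c) * Real.exp (l * c) := by
          rw [Finset.sum_div, Finset.sum_mul, ← Finset.sum_sub_distrib, ← Finset.sum_add_distrib]
          apply Finset.sum_congr rfl
          intro k _
          field_simp
      _ = 1 - q + q * Real.exp (l * c) := by rw [hw1, ← hμ, ← hq]
  have hpos : (0:ℝ) < 1 - q + q * Real.exp (l * c) := by
    rcases eq_or_lt_of_le hq0 with h | h
    · simp [← h]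
    · have := Real.exp_pos (l * c)
      nlinarith
  have hlog := log_core q hq0 hq1 (l * c)
  have hkey : 1 - q + q * Real.exp (l * c) ≤ Real.exp (l * μ + l ^ 2 * c ^ 2 / 8) := by
    rw [← Real.exp_log hpos]
    apply Real.exp_le_exp.2
    have : q * (l * c) = l * μ := by rw [hq]; field_simp
    calc Real.log (1 - q + q * Real.exp (l * c)) ≤ q * (l * c) + (l * c) ^ 2 / 8 := hlog
      _ = l * μ + l ^ 2 * c ^ 2 / 8 := by rw [this]; ring
  calc ∑ k, w k * Real.exp (l * (f k - μ))
      = Real.exp (-(l * μ)) * ∑ k, w k * Real.exp (l * f k) := by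
        rw [Finset.mul_sum]
        apply Finset.sum_congr rfl
        intro k _
        rw [mul_sub, Real.exp_sub, Real.exp_neg, div_eq_mul_inv]
        ring
    _ ≤ Real.exp (-(l * μ)) * Real.exp (l * μ + l ^ 2 * c ^ 2 / 8) := by
        apply mul_le_mul_of_nonneg_left (le_trans hsum hkey) (Real.exp_nonneg _)
    _ = Real.exp (l ^ 2 * c ^ 2 / 8) := by rw [← Real.exp_add]; ring_nf

lemma tail_one_sided {m r : ℕ} (hr : 0 < r) (p : Fin m → ℝ) (hp0 : ∀ k, 0 ≤ p k)
    (hp1 : ∑ k, p k = 1) (g : Fin m → ℝ) (c : ℝ) (hc : 0 < c)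
    (hg0 : ∀ k, 0 ≤ g k) (hgc : ∀ k, g k ≤ c) (t : ℝ) (ht : 0 ≤ t) :
    ∑ ks : Fin r → Fin m,
        (if (r : ℝ) * (∑ k, p k * g k) + t ≤ ∑ i, g (ks i) then ∏ i, p (ks i) else 0)
      ≤ Real.exp (-2 * t ^ 2 / (r * c ^ 2)) := by
  have hrR : (0:ℝ) < (r : ℝ) := Nat.cast_pos.2 hr
  set μ : ℝ := ∑ k, p k * g k with hμ
  set l : ℝ := 4 * t / (r * c ^ 2) with hl
  have hl0 : 0 ≤ l := by positivity
  have hsum_const : ∀ ks : Fin r → Fin m,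
      (∑ i : Fin r, l * (g (ks i) - μ)) = l * ((∑ i, g (ks i)) - (r : ℝ) * μ) := by
    intro ks
    rw [← Finset.mul_sum, Finset.sum_sub_distrib, Finset.sum_const, Finset.card_univ,
      Fintype.card_fin, nsmul_eq_mul]
  have hpt : ∀ ks : Fin r → Fin m,
      (if (r : ℝ) * μ + t ≤ ∑ i, g (ks i) then ∏ i, p (ks i) else 0)
        ≤ Real.exp (-(l * t)) * ∏ i, (p (ks i) * Real.exp (l * (g (ks i) - μ))) := by
    intro ks
    have hW : 0 ≤ ∏ i, p (ks i) := Finset.prod_nonneg fun i _ => hp0 (ks i)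
    have hprod : Real.exp (-(l * t)) * ∏ i, (p (ks i) * Real.exp (l * (g (ks i) - μ)))
        = (∏ i, p (ks i)) * Real.exp (l * ((∑ i, g (ks i)) - (r : ℝ) * μ) - l * t) := by
      rw [Finset.prod_mul_distrib, ← Real.exp_sum, hsum_const, Real.exp_sub, Real.exp_neg,
        div_eq_mul_inv]
      ring
    rw [hprod]
    split_ifs with hcond
    · nth_rewrite 1 [← mul_one (∏ i, p (ks i))]
      apply mul_le_mul_of_nonneg_left _ hW
      apply Real.one_le_exp
      have : 0 ≤ (∑ i, g (ks i)) - (r : ℝ) * μ - t := by linarith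
      nlinarith
    · positivity
  calc ∑ ks : Fin r → Fin m,
        (if (r : ℝ) * μ + t ≤ ∑ i, g (ks i) then ∏ i, p (ks i) else 0)
      ≤ ∑ ks : Fin r → Fin m,
          Real.exp (-(l * t)) * ∏ i, (p (ks i) * Real.exp (l * (g (ks i) - μ))) :=
        Finset.sum_le_sum fun ks _ => hpt ks
    _ = Real.exp (-(l * t)) *
          (∑ k, p k * Real.exp (l * (g k - μ))) ^ r := by
        rw [← Finset.mul_sum, Fintype.sum_pow]
    _ ≤ Real.exp (-(l * t)) * (Real.exp (l ^ 2 * c ^ 2 / 8)) ^ r := by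
        apply mul_le_mul_of_nonneg_left _ (Real.exp_nonneg _)
        apply pow_le_pow_left₀
        · exact Finset.sum_nonneg fun k _ =>
            mul_nonneg (hp0 k) (Real.exp_nonneg _)
        · exact mgf_bound p g hp0 hp1 c hc hg0 hgc l
    _ = Real.exp (-(l * t) + (r : ℝ) * (l ^ 2 * c ^ 2 / 8)) := by
        rw [← Real.exp_nat_mul, ← Real.exp_add]
    _ = Real.exp (-2 * t ^ 2 / (r * c ^ 2)) := by
        congr 1
        rw [hl]
        field_simp
        ring

lemma tail_two_sided {m r : ℕ} (hr : 0 < r) (p : Fin m → ℝ) (hp0 : ∀ k, 0 ≤ p k)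
    (hp1 : ∑ k, p k = 1) (g : Fin m → ℝ) (c : ℝ) (hc : 0 < c)
    (hg0 : ∀ k, 0 ≤ g k) (hgc : ∀ k, g k ≤ c) (t : ℝ) (ht : 0 ≤ t) :
    ∑ ks : Fin r → Fin m,
        (if t < |(∑ i, g (ks i)) - (r : ℝ) * (∑ k, p k * g k)| then ∏ i, p (ks i) else 0)
      ≤ 2 * Real.exp (-2 * t ^ 2 / (r * c ^ 2)) := by
  have hrR : (0:ℝ) < (r : ℝ) := Nat.cast_pos.2 hr
  set μ : ℝ := ∑ k, p k * g k with hμ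
  set g' : Fin m → ℝ := fun k => c - g k with hg'
  have hμ' : (∑ k, p k * g' k) = c - μ := by
    simp only [hg', mul_sub]
    rw [Finset.sum_sub_distrib, ← Finset.sum_mul, hp1, one_mul, hμ]
  have hpt : ∀ ks : Fin r → Fin m,
      (if t < |(∑ i, g (ks i)) - (r : ℝ) * μ| then ∏ i, p (ks i) else 0)
        ≤ (if (r : ℝ) * μ + t ≤ ∑ i, g (ks i) then ∏ i, p (ks i) else 0)
          + (if (r : ℝ) * (∑ k, p k * g' k) + t ≤ ∑ i, g' (ks i) then ∏ i, p (ks i) else 0) := by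
    intro ks
    have hW : 0 ≤ ∏ i, p (ks i) := Finset.prod_nonneg fun i _ => hp0 (ks i)
    have hT' : (∑ i, g' (ks i)) = (r : ℝ) * c - ∑ i, g (ks i) := by
      simp only [hg']
      rw [Finset.sum_sub_distrib, Finset.sum_const, Finset.card_univ, Fintype.card_fin,
        nsmul_eq_mul]
    have hi1 : 0 ≤ (if (r : ℝ) * μ + t ≤ ∑ i, g (ks i) then ∏ i, p (ks i) else 0) := by
      split_ifs; exacts [hW, le_rfl]
    have hi2 : 0 ≤ (if (r : ℝ) * (∑ k, p k * g' k) + t ≤ ∑ i, g' (ks i)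
        then ∏ i, p (ks i) else 0) := by
      split_ifs; exacts [hW, le_rfl]
    by_cases h : t < |(∑ i, g (ks i)) - (r : ℝ) * μ|
    · rw [if_pos h]
      rcases lt_abs.1 h with hA | hA
      · rw [if_pos (by linarith)]
        linarith
      · have : (r : ℝ) * (∑ k, p k * g' k) + t ≤ ∑ i, g' (ks i) := by
          rw [hμ', hT']
          linarith
        rw [if_pos this]
        linarith
    · rw [if_neg h]
      linarith
  calc ∑ ks : Fin r → Fin m,
        (if t < |(∑ i, g (ks i)) - (r : ℝ) * μ| then ∏ i, p (ks i) else 0)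
      ≤ ∑ ks : Fin r → Fin m,
          ((if (r : ℝ) * μ + t ≤ ∑ i, g (ks i) then ∏ i, p (ks i) else 0)
          + (if (r : ℝ) * (∑ k, p k * g' k) + t ≤ ∑ i, g' (ks i) then ∏ i, p (ks i) else 0)) :=
        Finset.sum_le_sum fun ks _ => hpt ks
    _ = (∑ ks : Fin r → Fin m,
          (if (r : ℝ) * μ + t ≤ ∑ i, g (ks i) then ∏ i, p (ks i) else 0))
        + ∑ ks : Fin r → Fin m,
          (if (r : ℝ) * (∑ k, p k * g' k) + t ≤ ∑ i, g' (ks i) then ∏ i, p (ks i) else 0) :=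
        Finset.sum_add_distrib
    _ ≤ Real.exp (-2 * t ^ 2 / (r * c ^ 2)) + Real.exp (-2 * t ^ 2 / (r * c ^ 2)) := by
        apply add_le_add
        · exact tail_one_sided hr p hp0 hp1 g c hc hg0 hgc t ht
        · exact tail_one_sided hr p hp0 hp1 g' c hc
            (fun k => by simp [hg']; linarith [hgc k])
            (fun k => by simp [hg']; linarith [hg0 k]) t ht
    _ = 2 * Real.exp (-2 * t ^ 2 / (r * c ^ 2)) := by ring

theorem stmt2 {m n r : ℕ} (hr : 0 < r) (φ : ℝ) (hφ : 1 ≤ φ)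
    (A : Matrix (Fin m) (Fin n) ℂ)
    (p : Fin m → ℝ) (hp0 : ∀ k, 0 ≤ p k) (hp1 : ∑ k, p k = 1)
    (hover : ∀ k, (∑ j, ‖A k j‖ ^ 2) / (φ * frobSq A) ≤ p k)
    (S : (Fin r → Fin m) → Matrix (Fin r) (Fin m) ℂ)
    (hS : ∀ ks i j, S ks i j = if j = ks i then ((Real.sqrt ((r : ℝ) * p (ks i)))⁻¹ : ℂ) else 0) :
    (∀ ks : Fin r → Fin m, frobSq (S ks * A) ≤ φ * frobSq A) ∧
    ∀ δ : ℝ, 0 < δ → δ ≤ 1 →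
      1 - δ ≤ ∑ ks : Fin r → Fin m,
        if |frobSq (S ks * A) - frobSq A|
            ≤ Real.sqrt (φ ^ 2 * Real.log (2 / δ) / (2 * r)) * frobSq A
        then ∏ i, p (ks i) else 0 := by
  have hrR : (0:ℝ) < (r : ℝ) := Nat.cast_pos.2 hr
  have hφ0 : (0:ℝ) < φ := lt_of_lt_of_le one_pos hφ
  set F : ℝ := frobSq A with hF
  set X : Fin m → ℝ := fun k => ∑ j, ‖A k j‖ ^ 2 with hX
  have hX0 : ∀ k, 0 ≤ X k := fun k =>
    Finset.sum_nonneg fun j _ => pow_nonneg (norm_nonneg _) 2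
  have hXF : ∑ k, X k = F := rfl
  have hF0 : 0 ≤ F := by rw [← hXF]; exact Finset.sum_nonneg fun k _ => hX0 k
  have hXp : ∀ k, X k ≤ φ * F * p k := by
    intro k
    rcases eq_or_lt_of_le hF0 with h | h
    · have hXk : X k = 0 := by
        have h1 : X k ≤ F := by
          rw [← hXF]
          exact Finset.single_le_sum (fun j _ => hX0 j) (Finset.mem_univ k)
        have := hX0 k
        linarith [h1, h.symm ▸ le_refl F]
      rw [hXk, ← h]
      simp
    · have hd := hover k
      rw [div_le_iff₀ (by positivity : (0:ℝ) < φ * F)] at hd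
      calc X k = (∑ j, ‖A k j‖ ^ 2) := rfl
        _ ≤ p k * (φ * F) := hd
        _ = φ * F * p k := by ring
  set g : Fin m → ℝ := fun k => X k * ((r : ℝ) * p k)⁻¹ with hg
  set c : ℝ := φ * F / r with hc
  have hc0 : 0 ≤ c := by positivity
  have hg0 : ∀ k, 0 ≤ g k := fun k =>
    mul_nonneg (hX0 k) (inv_nonneg.2 (mul_nonneg hrR.le (hp0 k)))
  have hXzero : ∀ k, p k = 0 → X k = 0 := by
    intro k hk
    have := hXp k
    rw [hk, mul_zero] at this
    linarith [hX0 k]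
  have hgc : ∀ k, g k ≤ c := by
    intro k
    rcases eq_or_lt_of_le (hp0 k) with h | h
    · have : g k = 0 := by rw [hg]; simp [hXzero k h.symm]
      rw [this]; exact hc0
    · have h1 : g k ≤ (φ * F * p k) * ((r : ℝ) * p k)⁻¹ :=
        mul_le_mul_of_nonneg_right (hXp k) (inv_nonneg.2 (mul_nonneg hrR.le (hp0 k)))
      have h2 : (φ * F * p k) * ((r : ℝ) * p k)⁻¹ = c := by
        rw [hc]; field_simp
      linarith
  have hmean : ∑ k, p k * g k = F / r := by
    have : ∀ k ∈ Finset.univ, p k * g k = X k / r := by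
      intro k _
      rcases eq_or_lt_of_le (hp0 k) with h | h
      · rw [← h, hXzero k h.symm]; simp
      · rw [hg]; field_simp
    rw [Finset.sum_congr rfl this, ← Finset.sum_div, hXF]
  have hrμ : (r : ℝ) * (∑ k, p k * g k) = F := by
    rw [hmean]; field_simp
  have hfrob : ∀ ks : Fin r → Fin m, frobSq (S ks * A) = ∑ i, g (ks i) := by
    intro ks
    show (∑ i, ∑ j, ‖(S ks * A) i j‖ ^ 2) = _
    apply Finset.sum_congr rfl
    intro i _
    have hy : 0 ≤ (r : ℝ) * p (ks i) := mul_nonneg hrR.le (hp0 _)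
    have hrow : ∀ j, (S ks * A) i j
        = ((Real.sqrt ((r : ℝ) * p (ks i)))⁻¹ : ℂ) * A (ks i) j := by
      intro j
      rw [Matrix.mul_apply]
      simp [hS, ite_mul, zero_mul]
    calc ∑ j, ‖(S ks * A) i j‖ ^ 2
        = ∑ j, ((r : ℝ) * p (ks i))⁻¹ * ‖A (ks i) j‖ ^ 2 := by
          apply Finset.sum_congr rfl
          intro j _
          rw [hrow j, norm_mul, mul_pow]
          congr 1
          rw [norm_inv, Complex.norm_real, Real.norm_eq_abs,
            abs_of_nonneg (Real.sqrt_nonneg _), inv_pow, Real.sq_sqrt hy]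
      _ = g (ks i) := by
          rw [← Finset.mul_sum, hg, mul_comm]
  have part1 : ∀ ks : Fin r → Fin m, frobSq (S ks * A) ≤ φ * frobSq A := by
    intro ks
    rw [hfrob ks, ← hF]
    calc ∑ i, g (ks i) ≤ ∑ _i : Fin r, c := Finset.sum_le_sum fun i _ => hgc (ks i)
      _ = (r : ℝ) * c := by
          rw [Finset.sum_const, Finset.card_univ, Fintype.card_fin, nsmul_eq_mul]
      _ = φ * F := by rw [hc]; field_simp
  refine ⟨part1, fun δ hδ0 hδ1 => ?_⟩
  set s : ℝ := Real.sqrt (φ ^ 2 * Real.log (2 / δ) / (2 * r)) with hs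
  set t : ℝ := s * F with hts
  have ht0 : 0 ≤ t := mul_nonneg (Real.sqrt_nonneg _) hF0
  have hWsum : ∑ ks : Fin r → Fin m, ∏ i, p (ks i) = 1 := by
    rw [← Fintype.sum_pow, hp1, one_pow]
  rcases eq_or_lt_of_le hF0 with hFz | hFpos
  · have hcond : ∀ ks : Fin r → Fin m, |frobSq (S ks * A) - F| ≤ t := by
      intro ks
      have hgz : ∀ k, g k = 0 := by
        intro k
        have h1 := hgc k
        have h2 := hg0 k
        have : c = 0 := by rw [hc, ← hFz]; ring
        linarith [this ▸ h1]
      rw [hfrob ks]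
      simp [hgz, ← hFz, hts]
    calc 1 - δ ≤ 1 := by linarith
      _ = ∑ ks : Fin r → Fin m, ∏ i, p (ks i) := hWsum.symm
      _ = ∑ ks : Fin r → Fin m,
            if |frobSq (S ks * A) - F| ≤ t then ∏ i, p (ks i) else 0 := by
          apply Finset.sum_congr rfl
          intro ks _
          rw [if_pos (hcond ks)]
  · have hcpos : 0 < c := by rw [hc]; positivity
    have hlog0 : 0 ≤ Real.log (2 / δ) :=
      Real.log_nonneg (by rw [le_div_iff₀ hδ0]; linarith)
    have ht2 : t ^ 2 = φ ^ 2 * Real.log (2 / δ) / (2 * r) * F ^ 2 := by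
      rw [hts, mul_pow, hs, Real.sq_sqrt (by positivity)]
    have hFne : F ≠ 0 := hFpos.ne'
    have hexp : 2 * Real.exp (-2 * t ^ 2 / ((r : ℝ) * c ^ 2)) = δ := by
      have harg : -2 * t ^ 2 / ((r : ℝ) * c ^ 2) = -Real.log (2 / δ) := by
        rw [ht2, hc]
        field_simp
      rw [harg, Real.exp_neg, Real.exp_log (by positivity)]
      field_simp
    have key := tail_two_sided hr p hp0 hp1 g c hcpos hg0 hgc t ht0
    have hbad : ∑ ks : Fin r → Fin m,
        (if ¬ (|frobSq (S ks * A) - F| ≤ t) then ∏ i, p (ks i) else 0) ≤ δ := by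
      calc ∑ ks : Fin r → Fin m,
            (if ¬ (|frobSq (S ks * A) - F| ≤ t) then ∏ i, p (ks i) else 0)
          = ∑ ks : Fin r → Fin m,
            (if t < |(∑ i, g (ks i)) - (r : ℝ) * (∑ k, p k * g k)| then ∏ i, p (ks i) else 0) := by
            apply Finset.sum_congr rfl
            intro ks _
            congr 1
            simp only [not_le, hfrob ks, hrμ]
        _ ≤ 2 * Real.exp (-2 * t ^ 2 / ((r : ℝ) * c ^ 2)) := key
        _ = δ := hexp
    have hsplit : (∑ ks : Fin r → Fin m,
          (if |frobSq (S ks * A) - F| ≤ t then ∏ i, p (ks i) else 0))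
        + (∑ ks : Fin r → Fin m,
          (if ¬ (|frobSq (S ks * A) - F| ≤ t) then ∏ i, p (ks i) else 0)) = 1 := by
      rw [← Finset.sum_add_distrib, ← hWsum]
      apply Finset.sum_congr rfl
      intro ks _
      by_cases h : |frobSq (S ks * A) - F| ≤ t
      · simp [h]
      · simp [h]
    linarith
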